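/- The Gaussian function Φ₀(x,t) = (πħ)^{−1/4}(Ω/μ)^{1/4} exp(−((iρ+Ω)/(2ħμ))x²)·exp(−(i/2)Ωt − (i/(2ħ))κ̃cC₅t) solves the stationary associated linear equation: −iħ∂ₜΦ₀ − (μħ²/2)∂ₓ²Φ₀ − iħρ(x∂ₓΦ₀ + Φ₀/2) + (σ̃/2)x²Φ₀ + (κ̃c/2)C₅Φ₀ = 0 for all (x,t). -/

import Mathlib

noncomputable section

open Complex

/-- The Gaussian ground state
`Φ₀(x,t) = (πħ)^{−1/4}(Ω/μ)^{1/4} exp(−((iρ+Ω)/(2ħμ))x²)·exp(−(i/2)Ωt − (i/(2ħ))κ̃cC₅t)`. -/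
def Phi0 (hbar μ ρ c κt C₅ Ω : ℝ) (x t : ℝ) : ℂ :=
  (((Real.pi * hbar) ^ (-(1 / 4 : ℝ)) * (Ω / μ) ^ ((1 / 4 : ℝ)) : ℝ) : ℂ) *
    Complex.exp (-((Complex.I * (ρ : ℂ) + (Ω : ℂ)) / ((2 * hbar * μ : ℝ) : ℂ)) *
      (x : ℂ) ^ 2) *
    Complex.exp (-(Complex.I / 2) * (Ω : ℂ) * (t : ℂ)
      - (Complex.I / ((2 * hbar : ℝ) : ℂ)) * ((κt * c * C₅ : ℝ) : ℂ) * (t : ℂ))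

lemma phi0_eq (hbar μ ρ c κt C₅ Ω : ℝ) (x t : ℝ) :
    Phi0 hbar μ ρ c κt C₅ Ω x t =
      (((Real.pi * hbar) ^ (-(1 / 4 : ℝ)) * (Ω / μ) ^ ((1 / 4 : ℝ)) : ℝ) : ℂ) *
        Complex.exp (-((Complex.I * (ρ : ℂ) + (Ω : ℂ)) / ((2 * hbar * μ : ℝ) : ℂ)) *
          (x : ℂ) ^ 2) *
        Complex.exp ((-(Complex.I / 2) * (Ω : ℂ)
          - (Complex.I / ((2 * hbar : ℝ) : ℂ)) * ((κt * c * C₅ : ℝ) : ℂ)) * (t : ℂ)) := by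
  unfold Phi0
  congr 1
  congr 1
  ring

lemma hasDerivAt_ofReal' (x : ℝ) : HasDerivAt (fun y : ℝ => (y : ℂ)) 1 x := by
  simpa using (hasDerivAt_id x).ofReal_comp

lemma hasDerivAt_ofReal_sq (x : ℝ) :
    HasDerivAt (fun y : ℝ => (y : ℂ) ^ 2) (2 * (x : ℂ)) x := by
  have : HasDerivAt (fun y : ℝ => (y : ℂ) * (y : ℂ)) _ x := (hasDerivAt_ofReal' x).mul (hasDerivAt_ofReal' x)
  have h3 : (fun y : ℝ => (y : ℂ) ^ 2) = fun y : ℝ => (y : ℂ) * (y : ℂ) := by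
    funext y; ring
  rw [h3]
  convert this using 1; ring

lemma spatial_deriv (A a E : ℂ) (x : ℝ) :
    HasDerivAt (fun y : ℝ => A * Complex.exp (a * (y : ℂ) ^ 2) * E)
      (2 * a * x * (A * Complex.exp (a * (x : ℂ) ^ 2) * E)) x := by
  have h1 : HasDerivAt (fun y : ℝ => a * (y : ℂ) ^ 2) (a * (2 * (x : ℂ))) x :=
    (hasDerivAt_ofReal_sq x).const_mul a
  have h2 : HasDerivAt (fun y : ℝ => A * Complex.exp (a * (y : ℂ) ^ 2) * E) _ x :=
    (h1.cexp.const_mul A).mul_const E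
  convert h2 using 1
  ring

/-- `Φ₀` solves the stationary associated linear equation. -/
theorem gaussian_solves_stationary_ALE
    (hbar μ ρ c κt C₅ σt Ω : ℝ) (h_hbar : 0 < hbar) (hμ : 0 < μ)
    (hpos : 0 < σt * μ - ρ ^ 2) (hΩ : Ω = Real.sqrt (σt * μ - ρ ^ 2)) :
    ∀ x t : ℝ,
      (-Complex.I * (hbar : ℂ)) * deriv (fun τ => Phi0 hbar μ ρ c κt C₅ Ω x τ) t
        - ((μ * hbar ^ 2 / 2 : ℝ) : ℂ) *
            deriv (fun y => deriv (fun z => Phi0 hbar μ ρ c κt C₅ Ω z t) y) x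
        - Complex.I * (hbar : ℂ) * (ρ : ℂ) *
            ((x : ℂ) * deriv (fun y => Phi0 hbar μ ρ c κt C₅ Ω y t) x
              + Phi0 hbar μ ρ c κt C₅ Ω x t / 2)
        + ((σt / 2 * x ^ 2 : ℝ) : ℂ) * Phi0 hbar μ ρ c κt C₅ Ω x t
        + ((κt * c / 2 * C₅ : ℝ) : ℂ) * Phi0 hbar μ ρ c κt C₅ Ω x t = 0 := by
  intro x t
  set A : ℂ := (((Real.pi * hbar) ^ (-(1 / 4 : ℝ)) * (Ω / μ) ^ ((1 / 4 : ℝ)) : ℝ) : ℂ) with hA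
  set a : ℂ := -((Complex.I * (ρ : ℂ) + (Ω : ℂ)) / ((2 * hbar * μ : ℝ) : ℂ)) with ha
  set b : ℂ := -(Complex.I / 2) * (Ω : ℂ)
      - (Complex.I / ((2 * hbar : ℝ) : ℂ)) * ((κt * c * C₅ : ℝ) : ℂ) with hb
  have hPhi : ∀ y τ : ℝ, Phi0 hbar μ ρ c κt C₅ Ω y τ
      = A * Complex.exp (a * (y : ℂ) ^ 2) * Complex.exp (b * (τ : ℂ)) := by
    intro y τ
    rw [phi0_eq]
  -- time derivative
  have hdt : deriv (fun τ => Phi0 hbar μ ρ c κt C₅ Ω x τ) t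
      = b * Phi0 hbar μ ρ c κt C₅ Ω x t := by
    have hfun : (fun τ : ℝ => Phi0 hbar μ ρ c κt C₅ Ω x τ)
        = fun τ : ℝ => A * Complex.exp (a * (x : ℂ) ^ 2) * Complex.exp (b * (τ : ℂ)) := by
      funext τ; exact hPhi x τ
    rw [hfun, hPhi x t]
    have h1 : HasDerivAt (fun τ : ℝ => b * (τ : ℂ)) b t := by
      simpa using (hasDerivAt_ofReal' t).const_mul b
    have h2 := (h1.cexp).const_mul (A * Complex.exp (a * (x : ℂ) ^ 2))
    rw [h2.deriv]
    ring
  -- first spatial derivative at arbitrary point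
  have hdx : ∀ y : ℝ, deriv (fun z => Phi0 hbar μ ρ c κt C₅ Ω z t) y
      = 2 * a * y * Phi0 hbar μ ρ c κt C₅ Ω y t := by
    intro y
    have hfun : (fun z : ℝ => Phi0 hbar μ ρ c κt C₅ Ω z t)
        = fun z : ℝ => A * Complex.exp (a * (z : ℂ) ^ 2) * Complex.exp (b * (t : ℂ)) := by
      funext z; exact hPhi z t
    rw [hfun, hPhi y t, (spatial_deriv A a (Complex.exp (b * (t : ℂ))) y).deriv]
  -- second spatial derivative
  have hdx2 : deriv (fun y => deriv (fun z => Phi0 hbar μ ρ c κt C₅ Ω z t) y) x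
      = (2 * a + 4 * a ^ 2 * (x : ℂ) ^ 2) * Phi0 hbar μ ρ c κt C₅ Ω x t := by
    have hfun : (fun y : ℝ => deriv (fun z => Phi0 hbar μ ρ c κt C₅ Ω z t) y)
        = fun y : ℝ => (2 * a * (y : ℂ)) *
            (A * Complex.exp (a * (y : ℂ) ^ 2) * Complex.exp (b * (t : ℂ))) := by
      funext y
      rw [hdx y, hPhi]
    rw [hfun]
    have h1 : HasDerivAt (fun y : ℝ => 2 * a * (y : ℂ)) (2 * a) x := by
      simpa using (hasDerivAt_ofReal' x).const_mul (2 * a)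
    have h2 := spatial_deriv A a (Complex.exp (b * (t : ℂ))) x
    have h3 : HasDerivAt (fun y : ℝ => 2 * a * (y : ℂ) *
      (A * Complex.exp (a * (y : ℂ) ^ 2) * Complex.exp (b * (t : ℂ)))) _ x := h1.mul h2
    rw [h3.deriv, hPhi]
    ring
  rw [hdt, hdx2, hdx x, hPhi x t]
  have hΩ2 : (Ω : ℂ) ^ 2 = (σt : ℂ) * μ - (ρ : ℂ) ^ 2 := by
    have h : Ω ^ 2 = σt * μ - ρ ^ 2 := by
      rw [hΩ, Real.sq_sqrt hpos.le]
    exact_mod_cast h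
  have hh : (hbar : ℂ) ≠ 0 := by exact_mod_cast h_hbar.ne'
  have hm : (μ : ℂ) ≠ 0 := by exact_mod_cast hμ.ne'
  have ha' : 2 * (hbar : ℂ) * (μ : ℂ) * a = -(Complex.I * (ρ : ℂ) + (Ω : ℂ)) := by
    rw [ha]; push_cast; field_simp
  have hb' : 2 * (hbar : ℂ) * b
      = -Complex.I * (hbar : ℂ) * (Ω : ℂ)
        - Complex.I * ((κt : ℂ) * (c : ℂ) * (C₅ : ℂ)) := by
    rw [hb]; push_cast; field_simp
  have hI := Complex.I_sq
  have keyM : (2 * (μ : ℂ)) * ((-Complex.I * (hbar : ℂ)) * b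
      - ((μ * hbar ^ 2 / 2 : ℝ) : ℂ) * (2 * a + 4 * a ^ 2 * (x : ℂ) ^ 2)
      - Complex.I * (hbar : ℂ) * (ρ : ℂ) * ((x : ℂ) * (2 * a * (x : ℂ)) + 1 / 2)
      + ((σt / 2 * x ^ 2 : ℝ) : ℂ) + ((κt * c / 2 * C₅ : ℝ) : ℂ)) = 0 := by
    push_cast
    linear_combination (-Complex.I * (μ : ℂ)) * hb'
      + (-(μ : ℂ) * (hbar : ℂ)
          - (x : ℂ) ^ 2 * (2 * (hbar : ℂ) * (μ : ℂ) * a - Complex.I * (ρ : ℂ) - (Ω : ℂ))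
          - 2 * Complex.I * (ρ : ℂ) * (x : ℂ) ^ 2) * ha'
      + ((μ : ℂ) * ((hbar : ℂ) * (Ω : ℂ) + (κt : ℂ) * (c : ℂ) * (C₅ : ℂ))
          + (x : ℂ) ^ 2 * (ρ : ℂ) ^ 2) * hI
      + (-(x : ℂ) ^ 2) * hΩ2
  have key : (-Complex.I * (hbar : ℂ)) * b
      - ((μ * hbar ^ 2 / 2 : ℝ) : ℂ) * (2 * a + 4 * a ^ 2 * (x : ℂ) ^ 2)
      - Complex.I * (hbar : ℂ) * (ρ : ℂ) * ((x : ℂ) * (2 * a * (x : ℂ)) + 1 / 2)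
      + ((σt / 2 * x ^ 2 : ℝ) : ℂ) + ((κt * c / 2 * C₅ : ℝ) : ℂ) = 0 := by
    have h2 : (2 * (μ : ℂ)) ≠ 0 := by simp [hm]
    exact (mul_eq_zero.mp keyM).resolve_left h2
  linear_combination (A * Complex.exp (a * (x : ℂ) ^ 2) * Complex.exp (b * (t : ℂ))) * key

end
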